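/- Let ρ⃗ = {ρ_n} and σ⃗ = {σ_n} be sequences of density operators on finite-dimensional complex Hilbert spaces H_n, let d_n denote the number of distinct eigenvalues of σ_n, and suppose that (1/n)·log d_n → 0 as n → ∞. Let E_n be the pinching map with respect to σ_n and E(ρ⃗) = {E_n(ρ_n)}. Then for every ε ∈ [0,1], D̲(ε|ρ⃗‖σ⃗) ≤ D̲(ε|E(ρ⃗)‖σ⃗). -/

import Mathlib

open Filter Matrix
open scoped Classical ComplexOrder

noncomputable section

section Defs

variable {ι : Type*} [Fintype ι] [DecidableEq ι]

/-- A density operator: a positive semidefinite operator with unit trace. -/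
def IsDensityOp (A : Matrix ι ι ℂ) : Prop := A.PosSemidef ∧ A.trace = 1

/-- A test (POVM element): an operator `T` with `0 ≤ T ≤ I`. -/
def IsTest (T : Matrix ι ι ℂ) : Prop :=
  T.PosSemidef ∧ ((1 : Matrix ι ι ℂ) - T).PosSemidef

/-- An orthogonal projection: a Hermitian idempotent operator. -/
def IsOrthProj (P : Matrix ι ι ℂ) : Prop := P.IsHermitian ∧ P * P = P

/-- The orthogonal projection `{X ≥ 0}` onto the direct sum of eigenspaces of a Hermitian `X`
with nonnegative eigenvalues (junk value `0` if `X` is not Hermitian). -/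
def nnProj (X : Matrix ι ι ℂ) : Matrix ι ι ℂ :=
  if hX : X.IsHermitian then
    (hX.eigenvectorUnitary : Matrix ι ι ℂ) *
      (Matrix.diagonal fun i => if 0 ≤ hX.eigenvalues i then (1 : ℂ) else 0) *
      star (hX.eigenvectorUnitary : Matrix ι ι ℂ)
  else 0

/-- The type-I error `Tr[(I - {ρ - μ σ ≥ 0}) ρ]` of the spectral test. -/
def specErr (ρ σ : Matrix ι ι ℂ) (μ : ℝ) : ℝ :=
  (((1 : Matrix ι ι ℂ) - nnProj (ρ - (μ : ℂ) • σ)) * ρ).trace.re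

/-- Optimal ε-achievable type-II error `β_ε(ρ‖S)` against a set `S` of states. -/
def betaSet (ε : ℝ) (ρ : Matrix ι ι ℂ) (S : Set (Matrix ι ι ℂ)) : ℝ :=
  sInf {x : ℝ | ∃ T : Matrix ι ι ℂ, IsTest T ∧
    (((1 : Matrix ι ι ℂ) - T) * ρ).trace.re ≤ ε ∧
    x = sSup {y : ℝ | ∃ σ ∈ S, y = (T * σ).trace.re}}

/-- `log` of a Hermitian matrix via the functional calculus (with `Real.log 0 = 0`
on the kernel); junk value `0` if not Hermitian. -/
def hermLog (X : Matrix ι ι ℂ) : Matrix ι ι ℂ :=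
  if hX : X.IsHermitian then
    (hX.eigenvectorUnitary : Matrix ι ι ℂ) *
      (Matrix.diagonal fun i => (Real.log (hX.eigenvalues i) : ℂ)) *
      star (hX.eigenvectorUnitary : Matrix ι ι ℂ)
  else 0

/-- Support inclusion `supp ρ ⊆ supp σ`, expressed as kernel inclusion `ker σ ⊆ ker ρ`. -/
def SuppLE (ρ σ : Matrix ι ι ℂ) : Prop :=
  ∀ v : ι → ℂ, σ.mulVec v = 0 → ρ.mulVec v = 0

/-- Umegaki quantum relative entropy `D(ρ‖σ) = Tr[ρ(log ρ - log σ)]` if `supp ρ ⊆ supp σ`,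
and `+∞` otherwise. -/
def relEnt (ρ σ : Matrix ι ι ℂ) : EReal :=
  if SuppLE ρ σ then (((ρ * (hermLog ρ - hermLog σ)).trace.re : ℝ) : EReal) else ⊤

/-- The spectral projection of a Hermitian matrix onto the eigenspace of eigenvalue `μ`. -/
def eigProjAt (X : Matrix ι ι ℂ) (μ : ℝ) : Matrix ι ι ℂ :=
  if hX : X.IsHermitian then
    (hX.eigenvectorUnitary : Matrix ι ι ℂ) *
      (Matrix.diagonal fun i => if hX.eigenvalues i = μ then (1 : ℂ) else 0) *
      star (hX.eigenvectorUnitary : Matrix ι ι ℂ)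
  else 0

/-- The number of distinct eigenvalues of a Hermitian matrix. -/
def distinctEigCount (X : Matrix ι ι ℂ) : ℕ :=
  if hX : X.IsHermitian then (Finset.univ.image hX.eigenvalues).card else 0

/-- The pinching map with respect to `σ`: `ρ ↦ Σ_μ Π_μ ρ Π_μ` over the distinct
eigenvalues `μ` of `σ`. -/
def pinch (σ ρ : Matrix ι ι ℂ) : Matrix ι ι ℂ :=
  if hσ : σ.IsHermitian then
    ∑ μ ∈ Finset.univ.image hσ.eigenvalues, eigProjAt σ μ * ρ * eigProjAt σ μ
  else ρ

/-- The amplification `id_k ⊗ Φ` of a linear map on operators. -/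
def ampl (k : ℕ) (Φ : Matrix ι ι ℂ →ₗ[ℂ] Matrix ι ι ℂ)
    (M : Matrix (Fin k × ι) (Fin k × ι) ℂ) : Matrix (Fin k × ι) (Fin k × ι) ℂ :=
  Matrix.of fun p q => Φ (Matrix.of fun x y => M (p.1, x) (q.1, y)) p.2 q.2

/-- Complete positivity: every amplification `id_k ⊗ Φ` maps positive semidefinite
operators to positive semidefinite operators. -/
def IsCP (Φ : Matrix ι ι ℂ →ₗ[ℂ] Matrix ι ι ℂ) : Prop :=
  ∀ k : ℕ, ∀ M : Matrix (Fin k × ι) (Fin k × ι) ℂ, M.PosSemidef → (ampl k Φ M).PosSemidef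

/-- Trace preservation. -/
def IsTP (Φ : Matrix ι ι ℂ →ₗ[ℂ] Matrix ι ι ℂ) : Prop :=
  ∀ X : Matrix ι ι ℂ, (Φ X).trace = X.trace

end Defs

section SeqDefs

variable {Hn : ℕ → Type*} [∀ n, Fintype (Hn n)] [∀ n, DecidableEq (Hn n)]

/-- The spectral inf-divergence rate `D̲(ε|ρ⃗‖σ⃗)`. -/
def Dlow (ε : ℝ) (ρ σ : (n : ℕ) → Matrix (Hn n) (Hn n) ℂ) : EReal :=
  sSup ((fun a : ℝ => (a : EReal)) ''
    {a : ℝ | Filter.limsup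
      (fun n : ℕ => specErr (ρ n) (σ n) (Real.exp (n * a))) Filter.atTop ≤ ε})

/-- The supremum ε-achievable type-II error exponent `B(ε|ρ⃗‖σ⃗)`. -/
def Bexp (ε : ℝ) (ρ σ : (n : ℕ) → Matrix (Hn n) (Hn n) ℂ) : EReal :=
  sSup {x : EReal | ∃ T : (n : ℕ) → Matrix (Hn n) (Hn n) ℂ,
    (∀ n, IsTest (T n)) ∧
    Filter.limsup
      (fun n : ℕ => (((1 : Matrix (Hn n) (Hn n) ℂ) - T n) * ρ n).trace.re)
      Filter.atTop ≤ ε ∧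
    x = Filter.liminf
      (fun n : ℕ => ((↑(-(1 / (n : ℝ)) * Real.log ((T n * σ n).trace.re))) : EReal))
      Filter.atTop}

end SeqDefs

section TensorDefs

variable {H : Type*} [Fintype H] [DecidableEq H]

/-- The IID tensor power `A^{⊗n}`, acting on `H^{⊗n}` modeled with index type `Fin n → H`. -/
def tpow (A : Matrix H H ℂ) (n : ℕ) : Matrix (Fin n → H) (Fin n → H) ℂ :=
  Matrix.of fun x y => ∏ k : Fin n, A (x k) (y k)

/-- Tensor product of operators on `H^{⊗n}` and `H^{⊗m}`, as an operator on `H^{⊗(n+m)}`. -/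
def mTensor {n m : ℕ} (A : Matrix (Fin n → H) (Fin n → H) ℂ)
    (B : Matrix (Fin m → H) (Fin m → H) ℂ) :
    Matrix (Fin (n + m) → H) (Fin (n + m) → H) ℂ :=
  Matrix.of fun x y =>
    A (fun k => x (Fin.castAdd m k)) (fun k => y (Fin.castAdd m k)) *
      B (fun k => x (Fin.natAdd n k)) (fun k => y (Fin.natAdd n k))

end TensorDefs

/-- Classical spectral inf-divergence rate (with vanishing type-I error) for sequences of
(finitely supported) distributions on `ℕ`. -/
def cDlow (ρ σ : ℕ → ℕ → ℝ) : EReal :=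
  sSup ((fun a : ℝ => (a : EReal)) ''
    {a : ℝ | Filter.limsup
      (fun n : ℕ => ∑' x : ℕ, if ρ n x < Real.exp (n * a) * σ n x then ρ n x else 0)
      Filter.atTop = 0})

set_option linter.unusedSectionVars false

namespace PinchAux

variable {ι : Type*} [Fintype ι] [DecidableEq ι]

lemma trace_re_nonneg {A : Matrix ι ι ℂ} (hA : A.PosSemidef) : 0 ≤ A.trace.re := by
  have h : ∀ i, 0 ≤ (A i i).re := by
    intro i
    have := hA.re_dotProduct_nonneg (Pi.single i 1)
    simpa [Matrix.mulVec_single, dotProduct, Pi.single_apply, Finset.sum_ite_eq]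
      using this
  simpa [Matrix.trace, Matrix.diag, Complex.re_sum] using Finset.sum_nonneg fun i _ => h i

lemma trace_mul_re_nonneg {A B : Matrix ι ι ℂ} (hA : A.PosSemidef) (hB : B.PosSemidef) :
    0 ≤ ((A * B).trace).re := by
  obtain ⟨C, rfl⟩ : ∃ C : Matrix ι ι ℂ, A = Cᴴ * C := by
    open scoped MatrixOrder in
    obtain ⟨X, hX, -, rfl⟩ := CFC.exists_sqrt_of_isSelfAdjoint_of_quasispectrumRestricts
      hA.isHermitian (QuasispectrumRestricts.nnreal_of_nonneg hA.nonneg)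
    exact ⟨X, by rw [← Matrix.star_eq_conjTranspose, hX.star_eq]⟩
  have h1 : (Cᴴ * C * B).trace = (C * B * Cᴴ).trace := by
    rw [Matrix.mul_assoc]; exact Matrix.trace_mul_comm _ _
  rw [h1]
  exact trace_re_nonneg (hB.mul_mul_conjTranspose_same C)

lemma re_trace_herm_mul_comm {A B : Matrix ι ι ℂ} (hA : A.IsHermitian) (hB : B.IsHermitian) :
    ((A * B).trace).re = ((B * A).trace).re := by
  rw [Matrix.trace_mul_comm]

/-- AM–GM for traces: `re Tr[Cᴴ D] ≤ (θ Tr[CᴴC] + θ⁻¹ Tr[DᴴD])/2`. -/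
lemma re_trace_conjTranspose_mul_le (C D : Matrix ι ι ℂ) {θ : ℝ} (hθ : 0 < θ) :
    ((Cᴴ * D).trace).re ≤ (θ * ((Cᴴ * C).trace).re + θ⁻¹ * ((Dᴴ * D).trace).re) / 2 := by
  set a : ℝ := Real.sqrt θ with ha_def
  have ha : 0 < a := Real.sqrt_pos.mpr hθ
  have haa : a * a = θ := Real.mul_self_sqrt hθ.le
  set E : Matrix ι ι ℂ := (a : ℂ) • C - ((a⁻¹ : ℝ) : ℂ) • D with hE
  have h0 : 0 ≤ ((Eᴴ * E).trace).re := trace_re_nonneg (Matrix.posSemidef_conjTranspose_mul_self E)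
  have hexp : (Eᴴ * E).trace = ((a*a : ℝ) : ℂ) * (Cᴴ * C).trace
      - ((a * a⁻¹ : ℝ) : ℂ) * (Cᴴ * D).trace - ((a⁻¹ * a : ℝ) : ℂ) * (Dᴴ * C).trace
      + ((a⁻¹ * a⁻¹ : ℝ) : ℂ) * (Dᴴ * D).trace := by
    rw [hE]
    simp only [Matrix.conjTranspose_sub, Matrix.conjTranspose_smul, Matrix.sub_mul,
      Matrix.mul_sub, Matrix.smul_mul, Matrix.mul_smul, Matrix.trace_sub, Matrix.trace_add,
      Matrix.trace_smul, smul_eq_mul, Complex.star_def, Complex.conj_ofReal]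
    push_cast
    ring
  have hDC : ((Dᴴ * C).trace).re = ((Cᴴ * D).trace).re := by
    have : (Dᴴ * C) = (Cᴴ * D)ᴴ := by simp [Matrix.conjTranspose_mul]
    rw [this, Matrix.trace_conjTranspose]
    simp
  have haainv : a * a⁻¹ = 1 := mul_inv_cancel₀ ha.ne'
  have hainva : a⁻¹ * a = 1 := inv_mul_cancel₀ ha.ne'
  have hainv2 : a⁻¹ * a⁻¹ = θ⁻¹ := by
    rw [← mul_inv]; rw [haa]
  rw [haa, haainv, hainva, hainv2] at hexp
  have hre := congrArg Complex.re hexp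
  simp only [Complex.add_re, Complex.sub_re, Complex.re_ofReal_mul, Complex.ofReal_one,
    one_mul] at hre
  rw [hre, hDC] at h0
  linarith


lemma posSemidef_sum {α : Type*} (s : Finset α) (F : α → Matrix ι ι ℂ)
    (h : ∀ a ∈ s, (F a).PosSemidef) : (∑ a ∈ s, F a).PosSemidef := by
  classical
  induction s using Finset.induction_on with
  | empty => simpa using Matrix.PosSemidef.zero
  | insert _ _ hni ih =>
      rw [Finset.sum_insert hni]
      exact ((h _ (Finset.mem_insert_self _ _)).add
        (ih fun a ha => h a (Finset.mem_insert_of_mem ha)))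

lemma posSemidef_ofReal_smul {c : ℝ} (hc : 0 ≤ c) {A : Matrix ι ι ℂ} (hA : A.PosSemidef) :
    ((c : ℂ) • A).PosSemidef := by
  refine Matrix.PosSemidef.of_dotProduct_mulVec_nonneg ?_ ?_
  · unfold Matrix.IsHermitian
    rw [Matrix.conjTranspose_smul, Complex.star_def, Complex.conj_ofReal, hA.1.eq]
  · intro x
    rw [Matrix.smul_mulVec, dotProduct_smul, smul_eq_mul]
    exact mul_nonneg (by exact_mod_cast Complex.zero_le_real.mpr hc) (hA.dotProduct_mulVec_nonneg x)



variable {X : Matrix ι ι ℂ}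

/-- Functional calculus on a Hermitian matrix. -/
def mfun (hX : X.IsHermitian) (f : ℝ → ℝ) : Matrix ι ι ℂ :=
  (hX.eigenvectorUnitary : Matrix ι ι ℂ) *
    Matrix.diagonal (fun i => ((f (hX.eigenvalues i) : ℝ) : ℂ)) *
    star (hX.eigenvectorUnitary : Matrix ι ι ℂ)

lemma star_mul_self_eigenU (hX : X.IsHermitian) :
    star (hX.eigenvectorUnitary : Matrix ι ι ℂ) * (hX.eigenvectorUnitary : Matrix ι ι ℂ) = 1 :=
  Matrix.mem_unitaryGroup_iff'.mp hX.eigenvectorUnitary.2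

lemma mul_star_self_eigenU (hX : X.IsHermitian) :
    (hX.eigenvectorUnitary : Matrix ι ι ℂ) * star (hX.eigenvectorUnitary : Matrix ι ι ℂ) = 1 :=
  Matrix.mem_unitaryGroup_iff.mp hX.eigenvectorUnitary.2

/-- Conjugation by the eigenvector unitary. -/
def conjU (hX : X.IsHermitian) (A : Matrix ι ι ℂ) : Matrix ι ι ℂ :=
  (hX.eigenvectorUnitary : Matrix ι ι ℂ) * A * star (hX.eigenvectorUnitary : Matrix ι ι ℂ)

lemma mfun_eq_conjU (hX : X.IsHermitian) (f : ℝ → ℝ) :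
    mfun hX f = conjU hX (Matrix.diagonal (fun i => ((f (hX.eigenvalues i) : ℝ) : ℂ))) := rfl

lemma conjU_mul (hX : X.IsHermitian) (A B : Matrix ι ι ℂ) :
    conjU hX A * conjU hX B = conjU hX (A * B) := by
  unfold conjU
  calc (↑hX.eigenvectorUnitary * A * star ↑hX.eigenvectorUnitary) *
        (↑hX.eigenvectorUnitary * B * star ↑hX.eigenvectorUnitary)
      = ↑hX.eigenvectorUnitary * A *
          ((star ↑hX.eigenvectorUnitary * ↑hX.eigenvectorUnitary) * (B * star ↑hX.eigenvectorUnitary)) := by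
        simp only [Matrix.mul_assoc]
    _ = ↑hX.eigenvectorUnitary * (A * B) * star ↑hX.eigenvectorUnitary := by
        rw [star_mul_self_eigenU hX, Matrix.one_mul]; simp only [Matrix.mul_assoc]

lemma conjU_one (hX : X.IsHermitian) : conjU hX 1 = 1 := by
  unfold conjU; rw [Matrix.mul_one, mul_star_self_eigenU hX]

lemma conjU_add (hX : X.IsHermitian) (A B : Matrix ι ι ℂ) :
    conjU hX (A + B) = conjU hX A + conjU hX B := by
  unfold conjU; rw [Matrix.mul_add, Matrix.add_mul]

lemma mfun_mul (hX : X.IsHermitian) (f g : ℝ → ℝ) :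
    mfun hX f * mfun hX g = mfun hX (fun x => f x * g x) := by
  rw [mfun_eq_conjU, mfun_eq_conjU, conjU_mul, mfun_eq_conjU]
  congr 1
  rw [Matrix.diagonal_mul_diagonal]
  congr 1
  funext i
  push_cast
  ring

lemma mfun_add (hX : X.IsHermitian) (f g : ℝ → ℝ) :
    mfun hX (fun x => f x + g x) = mfun hX f + mfun hX g := by
  rw [mfun_eq_conjU, mfun_eq_conjU, mfun_eq_conjU, ← conjU_add, Matrix.diagonal_add]
  congr 1
  funext i
  push_cast
  ring

lemma mfun_one (hX : X.IsHermitian) : mfun hX (fun _ => 1) = 1 := by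
  rw [mfun_eq_conjU,
    show (Matrix.diagonal fun i : ι => (((fun _ : ℝ => (1:ℝ)) (hX.eigenvalues i) : ℝ) : ℂ))
      = (1 : Matrix ι ι ℂ) by simp]
  exact conjU_one hX

lemma mfun_congr (hX : X.IsHermitian) {f g : ℝ → ℝ}
    (h : ∀ i, f (hX.eigenvalues i) = g (hX.eigenvalues i)) : mfun hX f = mfun hX g := by
  unfold mfun
  have : (fun i => ((f (hX.eigenvalues i) : ℝ) : ℂ))
      = (fun i => ((g (hX.eigenvalues i) : ℝ) : ℂ)) := funext fun i => by rw [h i]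
  rw [this]

lemma mfun_smul (hX : X.IsHermitian) (c : ℝ) (f : ℝ → ℝ) :
    mfun hX (fun x => c * f x) = (c : ℂ) • mfun hX f := by
  unfold mfun
  have h1 : (fun i => (((fun x => c * f x) (hX.eigenvalues i) : ℝ) : ℂ))
      = (c : ℂ) • (fun i => ((f (hX.eigenvalues i) : ℝ) : ℂ)) := funext fun i => by
    simp [Complex.ofReal_mul]
  rw [h1, Matrix.diagonal_smul, Matrix.mul_smul, Matrix.smul_mul]

lemma mfun_isHermitian (hX : X.IsHermitian) (f : ℝ → ℝ) : (mfun hX f).IsHermitian := by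
  unfold mfun Matrix.IsHermitian
  simp only [Matrix.conjTranspose_mul, Matrix.conjTranspose_smul, Matrix.star_eq_conjTranspose,
    Matrix.conjTranspose_conjTranspose, Matrix.diagonal_conjTranspose]
  have : star (fun i => ((f (hX.eigenvalues i) : ℝ) : ℂ)) = fun i => ((f (hX.eigenvalues i) : ℝ) : ℂ) := by
    funext i; simp [Complex.conj_ofReal]
  rw [this, Matrix.mul_assoc]

lemma mfun_posSemidef (hX : X.IsHermitian) {f : ℝ → ℝ} (hf : ∀ x, 0 ≤ f x) :
    (mfun hX f).PosSemidef := by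
  unfold mfun
  rw [Matrix.star_eq_conjTranspose]
  refine Matrix.PosSemidef.mul_mul_conjTranspose_same ?_ _
  refine Matrix.posSemidef_diagonal_iff.mpr fun i => ?_
  exact_mod_cast Complex.zero_le_real.mpr (hf _)

lemma mfun_id (hX : X.IsHermitian) : mfun hX (fun x => x) = X := by
  unfold mfun
  exact (hX.spectral_theorem).symm

lemma mfun_neg (hX : X.IsHermitian) (f : ℝ → ℝ) :
    mfun hX (fun x => -(f x)) = -(mfun hX f) := by
  unfold mfun
  have : (Matrix.diagonal fun i => (((fun x => -(f x)) (hX.eigenvalues i) : ℝ) : ℂ))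
      = -(Matrix.diagonal fun i => ((f (hX.eigenvalues i) : ℝ) : ℂ)) := by
    rw [Matrix.diagonal_neg]
    congr 1
    funext i
    push_cast
    ring
  rw [this, Matrix.mul_neg, Matrix.neg_mul]

lemma mfun_sum {α : Type*} (hX : X.IsHermitian) (s : Finset α) (F : α → ℝ → ℝ) :
    ∑ μ ∈ s, mfun hX (F μ) = mfun hX (fun x => ∑ μ ∈ s, F μ x) := by
  classical
  induction s using Finset.induction_on with
  | empty =>
      simp only [Finset.sum_empty]
      have h0 : mfun hX (fun _ => (0:ℝ)) = 0 := by
        have := mfun_smul hX 0 (fun _ => 1)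
        simpa using this
      rw [← h0]
  | insert _ _ hni ih =>
      rw [Finset.sum_insert hni, ih, ← mfun_add]
      apply mfun_congr
      intro i
      rw [Finset.sum_insert hni]

lemma conjU_cancel_left (hX : X.IsHermitian) (Z : Matrix ι ι ℂ) :
    star (hX.eigenvectorUnitary : Matrix ι ι ℂ) * ((hX.eigenvectorUnitary : Matrix ι ι ℂ) * Z)
      = Z := by
  rw [← Matrix.mul_assoc, star_mul_self_eigenU hX, Matrix.one_mul]

lemma conjU_inj (hX : X.IsHermitian) {A B : Matrix ι ι ℂ} (h : conjU hX A = conjU hX B) :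
    A = B := by
  have h2 := congrArg (fun M => star (hX.eigenvectorUnitary : Matrix ι ι ℂ) * M *
    (hX.eigenvectorUnitary : Matrix ι ι ℂ)) h
  simp only [conjU, Matrix.mul_assoc, star_mul_self_eigenU hX, Matrix.mul_one] at h2
  simpa only [conjU_cancel_left hX] using h2

lemma conjU_spectral (hX : X.IsHermitian) :
    conjU hX (Matrix.diagonal (RCLike.ofReal ∘ hX.eigenvalues)) = X := (hX.spectral_theorem).symm

/-- Commutation: anything commuting with `X` commutes with `mfun hX f`. -/
lemma mfun_comm (hX : X.IsHermitian) (f : ℝ → ℝ) {Y : Matrix ι ι ℂ} (h : X * Y = Y * X) :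
    mfun hX f * Y = Y * mfun hX f := by
  set U : Matrix ι ι ℂ := (hX.eigenvectorUnitary : Matrix ι ι ℂ) with hU
  set D : Matrix ι ι ℂ := Matrix.diagonal (RCLike.ofReal ∘ hX.eigenvalues) with hD
  set V : Matrix ι ι ℂ := star U * Y * U with hV
  have hU2 : U * star U = 1 := mul_star_self_eigenU hX
  have hYV : conjU hX V = Y := by
    show U * (star U * Y * U) * star U = Y
    calc U * (star U * Y * U) * star U = (U * star U) * Y * (U * star U) := by
          simp only [Matrix.mul_assoc]
      _ = Y := by rw [hU2, Matrix.one_mul, Matrix.mul_one]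
  have hDV : D * V = V * D := by
    apply conjU_inj hX
    rw [← conjU_mul hX D V, ← conjU_mul hX V D, hYV, conjU_spectral hX, h]
  have hent : ∀ i j, (hX.eigenvalues i ≠ hX.eigenvalues j) → V i j = 0 := by
    intro i j hij
    have h1 : (D * V) i j = ((hX.eigenvalues i : ℝ) : ℂ) * V i j := by
      rw [hD, Matrix.diagonal_mul]; rfl
    have h2 : (V * D) i j = V i j * ((hX.eigenvalues j : ℝ) : ℂ) := by
      rw [hD, Matrix.mul_diagonal]; rfl
    have h3 : ((hX.eigenvalues i : ℝ) : ℂ) * V i j = V i j * ((hX.eigenvalues j : ℝ) : ℂ) := by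
      rw [← h1, ← h2, hDV]
    have h4 : (((hX.eigenvalues i : ℝ) : ℂ) - ((hX.eigenvalues j : ℝ) : ℂ)) * V i j = 0 := by
      rw [sub_mul, h3]; ring
    rcases mul_eq_zero.mp h4 with h5 | h5
    · exfalso
      apply hij
      have h6 : ((hX.eigenvalues i : ℝ) : ℂ) = ((hX.eigenvalues j : ℝ) : ℂ) := by
        linear_combination h5
      exact_mod_cast h6
    · exact h5
  set F : Matrix ι ι ℂ := Matrix.diagonal (fun i => ((f (hX.eigenvalues i) : ℝ) : ℂ)) with hF
  have hFV : F * V = V * F := by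
    ext i j
    rw [hF, Matrix.diagonal_mul, Matrix.mul_diagonal]
    by_cases hij : hX.eigenvalues i = hX.eigenvalues j
    · rw [hij]; ring
    · rw [hent i j hij]; ring
  have hmf : mfun hX f = conjU hX F := rfl
  rw [hmf, ← hYV, conjU_mul, conjU_mul, hFV]


section PinchLemmas

variable {σ ρ : Matrix ι ι ℂ}

lemma eigProjAt_eq (hσ : σ.IsHermitian) (μ : ℝ) :
    eigProjAt σ μ = mfun hσ (fun x => if x = μ then 1 else 0) := by
  unfold eigProjAt mfun
  rw [dif_pos hσ]
  have : (fun i => (((fun x => if x = μ then (1:ℝ) else 0) (hσ.eigenvalues i) : ℝ) : ℂ))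
      = fun i => if hσ.eigenvalues i = μ then (1:ℂ) else 0 := funext fun i => by
    by_cases h : hσ.eigenvalues i = μ <;> simp [h]
  rw [← this]

lemma nnProj_eq {X : Matrix ι ι ℂ} (hX : X.IsHermitian) :
    nnProj X = mfun hX (fun x => if 0 ≤ x then 1 else 0) := by
  unfold nnProj mfun
  rw [dif_pos hX]
  have : (fun i => (((fun x => if 0 ≤ x then (1:ℝ) else 0) (hX.eigenvalues i) : ℝ) : ℂ))
      = fun i => if 0 ≤ hX.eigenvalues i then (1:ℂ) else 0 := funext fun i => by
    by_cases h : 0 ≤ hX.eigenvalues i <;> simp [h]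
  rw [← this]

lemma pinch_eq (hσ : σ.IsHermitian) (ρ : Matrix ι ι ℂ) :
    pinch σ ρ = ∑ μ ∈ Finset.univ.image hσ.eigenvalues,
      eigProjAt σ μ * ρ * eigProjAt σ μ := by
  unfold pinch
  rw [dif_pos hσ]

lemma mfun_zero {X : Matrix ι ι ℂ} (hX : X.IsHermitian) : mfun hX (fun _ => 0) = 0 := by
  have := mfun_smul hX 0 (fun _ => 1)
  simpa using this

lemma eigProj_mul (hσ : σ.IsHermitian) (μ ν : ℝ) :
    eigProjAt σ μ * eigProjAt σ ν
      = if μ = ν then eigProjAt σ μ else 0 := by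
  rw [eigProjAt_eq hσ, eigProjAt_eq hσ, mfun_mul]
  by_cases h : μ = ν
  · subst h
    simp only [if_true]
    apply mfun_congr
    intro i
    by_cases h2 : hσ.eigenvalues i = μ <;> simp [h2]
  · rw [if_neg h]
    rw [show (fun x => (if x = μ then (1:ℝ) else 0) * (if x = ν then 1 else 0))
        = fun _ => (0:ℝ) from funext fun x => by
      by_cases h1 : x = μ <;> by_cases h2 : x = ν <;> simp_all]
    exact mfun_zero hσ

lemma eigProj_sum (hσ : σ.IsHermitian) :
    ∑ μ ∈ Finset.univ.image hσ.eigenvalues, eigProjAt σ μ = 1 := by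
  have h1 : ∑ μ ∈ Finset.univ.image hσ.eigenvalues, eigProjAt σ μ
      = mfun hσ (fun x => ∑ μ ∈ Finset.univ.image hσ.eigenvalues,
          (if x = μ then 1 else 0)) := by
    rw [← mfun_sum]
    exact Finset.sum_congr rfl fun μ _ => eigProjAt_eq hσ μ
  rw [h1, ← mfun_one hσ]
  apply mfun_congr
  intro i
  rw [Finset.sum_ite_eq (Finset.univ.image hσ.eigenvalues) (hσ.eigenvalues i) (fun _ => (1:ℝ))]
  simp [Finset.mem_image_of_mem]

lemma eigProj_isHermitian (hσ : σ.IsHermitian) (μ : ℝ) : (eigProjAt σ μ).IsHermitian := by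
  rw [eigProjAt_eq hσ]; exact mfun_isHermitian hσ _

lemma eigProj_posSemidef (hσ : σ.IsHermitian) (μ : ℝ) : (eigProjAt σ μ).PosSemidef := by
  rw [eigProjAt_eq hσ]
  exact mfun_posSemidef hσ fun x => by by_cases h : x = μ <;> simp [h]

lemma sigma_mul_eigProj (hσ : σ.IsHermitian) (μ : ℝ) :
    σ * eigProjAt σ μ = (μ : ℂ) • eigProjAt σ μ := by
  have key : mfun hσ (fun x => x) * mfun hσ (fun x => if x = μ then 1 else 0)
      = (μ:ℂ) • mfun hσ (fun x => if x = μ then 1 else 0) := by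
    rw [mfun_mul]
    rw [show (fun x => x * (if x = μ then (1:ℝ) else 0))
        = fun x => μ * (if x = μ then (1:ℝ) else 0) from funext fun x => by
      by_cases h : x = μ <;> simp [h]]
    rw [mfun_smul]
  calc σ * eigProjAt σ μ
      = mfun hσ (fun x => x) * mfun hσ (fun x => if x = μ then 1 else 0) := by
        rw [mfun_id hσ, ← eigProjAt_eq hσ]
    _ = (μ:ℂ) • mfun hσ (fun x => if x = μ then 1 else 0) := key
    _ = (μ:ℂ) • eigProjAt σ μ := by rw [← eigProjAt_eq hσ]

lemma eigProj_mul_sigma (hσ : σ.IsHermitian) (μ : ℝ) :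
    eigProjAt σ μ * σ = (μ : ℂ) • eigProjAt σ μ := by
  have key : mfun hσ (fun x => if x = μ then 1 else 0) * mfun hσ (fun x => x)
      = (μ:ℂ) • mfun hσ (fun x => if x = μ then 1 else 0) := by
    rw [mfun_mul]
    rw [show (fun x => (if x = μ then (1:ℝ) else 0) * x)
        = fun x => μ * (if x = μ then (1:ℝ) else 0) from funext fun x => by
      by_cases h : x = μ <;> simp [h]]
    rw [mfun_smul]
  calc eigProjAt σ μ * σ
      = mfun hσ (fun x => if x = μ then 1 else 0) * mfun hσ (fun x => x) := by
        rw [mfun_id hσ, ← eigProjAt_eq hσ]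
    _ = (μ:ℂ) • mfun hσ (fun x => if x = μ then 1 else 0) := key
    _ = (μ:ℂ) • eigProjAt σ μ := by rw [← eigProjAt_eq hσ]

lemma isHermitian_sum_of {α : Type*} (s : Finset α) (F : α → Matrix ι ι ℂ)
    (h : ∀ a ∈ s, (F a).IsHermitian) : (∑ a ∈ s, F a).IsHermitian := by
  classical
  induction s using Finset.induction_on with
  | empty => simpa using Matrix.isHermitian_zero
  | insert _ _ hni ih =>
      rw [Finset.sum_insert hni]
      exact (h _ (Finset.mem_insert_self _ _)).add
        (ih fun a ha => h a (Finset.mem_insert_of_mem ha))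

lemma pinch_isHermitian (hσ : σ.IsHermitian) (hρ : ρ.IsHermitian) :
    (pinch σ ρ).IsHermitian := by
  rw [pinch_eq hσ]
  apply isHermitian_sum_of
  intro μ _
  have hP := (eigProj_isHermitian hσ μ).eq
  show (eigProjAt σ μ * ρ * eigProjAt σ μ)ᴴ = _
  rw [Matrix.conjTranspose_mul, Matrix.conjTranspose_mul, hP, hρ.eq, Matrix.mul_assoc]

lemma pinch_posSemidef (hσ : σ.IsHermitian) (hρ : ρ.PosSemidef) :
    (pinch σ ρ).PosSemidef := by
  rw [pinch_eq hσ]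
  apply posSemidef_sum
  intro μ _
  have := hρ.mul_mul_conjTranspose_same (eigProjAt σ μ)
  rwa [(eigProj_isHermitian hσ μ).eq] at this

lemma pinch_trace (hσ : σ.IsHermitian) (ρ : Matrix ι ι ℂ) :
    (pinch σ ρ).trace = ρ.trace := by
  rw [pinch_eq hσ, Matrix.trace_sum]
  have h1 : ∀ μ ∈ Finset.univ.image hσ.eigenvalues,
      (eigProjAt σ μ * ρ * eigProjAt σ μ).trace = (eigProjAt σ μ * ρ).trace := by
    intro μ hμ
    rw [Matrix.trace_mul_cycle, eigProj_mul hσ, if_pos rfl]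
  rw [Finset.sum_congr rfl h1, ← Matrix.trace_sum, ← Finset.sum_mul, eigProj_sum hσ,
    Matrix.one_mul]

lemma sigma_comm_pinch (hσ : σ.IsHermitian) (ρ : Matrix ι ι ℂ) :
    σ * pinch σ ρ = pinch σ ρ * σ := by
  rw [pinch_eq hσ, Finset.mul_sum, Finset.sum_mul]
  apply Finset.sum_congr rfl
  intro μ _
  calc σ * (eigProjAt σ μ * ρ * eigProjAt σ μ)
      = (σ * eigProjAt σ μ) * ρ * eigProjAt σ μ := by simp only [Matrix.mul_assoc]
    _ = ((μ:ℂ) • eigProjAt σ μ) * ρ * eigProjAt σ μ := by rw [sigma_mul_eigProj hσ]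
    _ = eigProjAt σ μ * ρ * ((μ:ℂ) • eigProjAt σ μ) := by
        rw [Matrix.smul_mul, Matrix.smul_mul, Matrix.mul_smul]
    _ = eigProjAt σ μ * ρ * (eigProjAt σ μ * σ) := by rw [eigProj_mul_sigma hσ]
    _ = eigProjAt σ μ * ρ * eigProjAt σ μ * σ := by simp only [Matrix.mul_assoc]

lemma eigProj_comm_pinch (hσ : σ.IsHermitian) (ρ : Matrix ι ι ℂ) (μ : ℝ) :
    pinch σ ρ * eigProjAt σ μ = eigProjAt σ μ * pinch σ ρ := by
  rw [pinch_eq hσ, Finset.sum_mul, Finset.mul_sum]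
  apply Finset.sum_congr rfl
  intro ν _
  calc eigProjAt σ ν * ρ * eigProjAt σ ν * eigProjAt σ μ
      = eigProjAt σ ν * ρ * (if ν = μ then eigProjAt σ ν else 0) := by
        rw [Matrix.mul_assoc, eigProj_mul hσ]
    _ = (if μ = ν then eigProjAt σ μ else 0) * (ρ * eigProjAt σ ν) := by
        by_cases h : ν = μ
        · subst h
          simp [Matrix.mul_assoc]
        · rw [if_neg h, if_neg (fun hh => h hh.symm)]
          simp
    _ = eigProjAt σ μ * eigProjAt σ ν * (ρ * eigProjAt σ ν) := by rw [eigProj_mul hσ]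
    _ = eigProjAt σ μ * (eigProjAt σ ν * ρ * eigProjAt σ ν) := by
        simp only [Matrix.mul_assoc]

end PinchLemmas

section PinchIneq

variable {σ ρ : Matrix ι ι ℂ}

lemma distinctEigCount_cast (hσ : σ.IsHermitian) :
    distinctEigCount σ = (Finset.univ.image hσ.eigenvalues).card := by
  unfold distinctEigCount; rw [dif_pos hσ]

/-- The pinching operator inequality `ρ ≤ d ⬝ E(ρ)`. -/
lemma pinch_psd_ineq (hσ : σ.IsHermitian) (hρ : ρ.PosSemidef) :
    (((distinctEigCount σ : ℕ) : ℂ) • pinch σ ρ - ρ).PosSemidef := by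
  classical
  set s := Finset.univ.image hσ.eigenvalues with hs
  set E := pinch σ ρ with hE
  set Pj : ℝ → Matrix ι ι ℂ := eigProjAt σ with hPj
  have hSpsd : (∑ μ ∈ s, ∑ ν ∈ s, (Pj μ - Pj ν) * ρ * (Pj μ - Pj ν)).PosSemidef := by
    apply posSemidef_sum
    intro μ _
    apply posSemidef_sum
    intro ν _
    have hherm : (Pj μ - Pj ν).IsHermitian :=
      ((eigProj_isHermitian hσ μ).sub (eigProj_isHermitian hσ ν))
    have h2 := hρ.mul_mul_conjTranspose_same (Pj μ - Pj ν)
    rwa [hherm.eq] at h2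
  have hT2 : ∑ μ ∈ s, ∑ ν ∈ s, Pj μ * ρ * Pj ν = ρ := by
    have hinner : ∀ μ, ∑ ν ∈ s, Pj μ * ρ * Pj ν = Pj μ * ρ := by
      intro μ
      rw [← Finset.mul_sum, hs, eigProj_sum hσ, Matrix.mul_one]
    rw [Finset.sum_congr rfl (fun μ _ => hinner μ), ← Finset.sum_mul, hs, eigProj_sum hσ,
      Matrix.one_mul]
  have hT3 : ∑ μ ∈ s, ∑ ν ∈ s, Pj ν * ρ * Pj μ = ρ := by
    have hinner : ∀ μ, ∑ ν ∈ s, Pj ν * ρ * Pj μ = ρ * Pj μ := by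
      intro μ
      rw [← Finset.sum_mul, ← Finset.sum_mul, hs, eigProj_sum hσ, Matrix.one_mul]
    rw [Finset.sum_congr rfl (fun μ _ => hinner μ), ← Finset.mul_sum, hs, eigProj_sum hσ,
      Matrix.mul_one]
  have hT1 : ∑ μ ∈ s, ∑ ν ∈ s, Pj μ * ρ * Pj μ = (s.card : ℂ) • E := by
    have hinner : ∀ μ, ∑ _ν ∈ s, Pj μ * ρ * Pj μ = (s.card : ℂ) • (Pj μ * ρ * Pj μ) := by
      intro μ
      rw [Finset.sum_const, Nat.cast_smul_eq_nsmul]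
    rw [Finset.sum_congr rfl (fun μ _ => hinner μ), ← Finset.smul_sum, hE, pinch_eq hσ]
  have hT4 : ∑ μ ∈ s, ∑ ν ∈ s, Pj ν * ρ * Pj ν = (s.card : ℂ) • E := by
    have hinner : ∀ μ : ℝ, μ ∈ s → ∑ ν ∈ s, Pj ν * ρ * Pj ν = E := by
      intro μ _
      rw [hE, pinch_eq hσ]
    rw [Finset.sum_congr rfl hinner, Finset.sum_const, Nat.cast_smul_eq_nsmul]
  have hkey : ∑ μ ∈ s, ∑ ν ∈ s, (Pj μ - Pj ν) * ρ * (Pj μ - Pj ν)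
      = ((s.card : ℂ) • E - ρ) - (ρ - (s.card : ℂ) • E) := by
    have hterm : ∀ μ ν : ℝ, (Pj μ - Pj ν) * ρ * (Pj μ - Pj ν)
        = (Pj μ * ρ * Pj μ - Pj μ * ρ * Pj ν) - (Pj ν * ρ * Pj μ - Pj ν * ρ * Pj ν) := by
      intro μ ν
      noncomm_ring
    calc ∑ μ ∈ s, ∑ ν ∈ s, (Pj μ - Pj ν) * ρ * (Pj μ - Pj ν)
        = ∑ μ ∈ s, ∑ ν ∈ s, ((Pj μ * ρ * Pj μ - Pj μ * ρ * Pj ν)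
            - (Pj ν * ρ * Pj μ - Pj ν * ρ * Pj ν)) :=
          Finset.sum_congr rfl fun μ _ => Finset.sum_congr rfl fun ν _ => hterm μ ν
      _ = ((s.card : ℂ) • E - ρ) - (ρ - (s.card : ℂ) • E) := by
          simp only [Finset.sum_sub_distrib]
          rw [hT1, hT2, hT3, hT4]
  have hcast : ((distinctEigCount σ : ℕ) : ℂ) = (s.card : ℂ) := by
    rw [distinctEigCount_cast hσ]
  have h2 : ((distinctEigCount σ : ℕ) : ℂ) • E - ρ
      = ((1/2 : ℝ) : ℂ) • (((s.card : ℂ) • E - ρ) - (ρ - (s.card : ℂ) • E)) := by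
    rw [hcast]
    push_cast
    module
  rw [h2, ← hkey]
  exact posSemidef_ofReal_smul (by norm_num) hSpsd

lemma ofReal_smul_herm (c : ℝ) {A : Matrix ι ι ℂ} (hA : A.IsHermitian) :
    ((c : ℂ) • A).IsHermitian := by
  show ((c:ℂ) • A)ᴴ = _
  rw [Matrix.conjTranspose_smul, Complex.star_def, Complex.conj_ofReal, hA.eq]

lemma nnProj_compl_eq {X : Matrix ι ι ℂ} (hX : X.IsHermitian) :
    (1 : Matrix ι ι ℂ) - nnProj X = mfun hX (fun x => if 0 ≤ x then 0 else 1) := by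
  have hsum : nnProj X + mfun hX (fun x => if 0 ≤ x then 0 else 1) = 1 := by
    rw [nnProj_eq hX, ← mfun_add hX, ← mfun_one hX]
    exact mfun_congr hX fun i => by by_cases h : 0 ≤ hX.eigenvalues i <;> simp [h]
  rw [← hsum, add_sub_cancel_left]

lemma nnProj_posSemidef {X : Matrix ι ι ℂ} (hX : X.IsHermitian) : (nnProj X).PosSemidef := by
  rw [nnProj_eq hX]
  exact mfun_posSemidef hX fun x => by by_cases h : 0 ≤ x <;> simp [h]

lemma nnProj_compl_posSemidef {X : Matrix ι ι ℂ} (hX : X.IsHermitian) :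
    ((1 : Matrix ι ι ℂ) - nnProj X).PosSemidef := by
  rw [nnProj_compl_eq hX]
  exact mfun_posSemidef hX fun x => by by_cases h : 0 ≤ x <;> simp [h]

lemma mul_nnProj_posSemidef {X : Matrix ι ι ℂ} (hX : X.IsHermitian) :
    (nnProj X * X).PosSemidef := by
  rw [nnProj_eq hX]
  nth_rewrite 2 [← mfun_id hX]
  rw [mfun_mul]
  refine mfun_posSemidef hX fun x => ?_
  by_cases h : 0 ≤ x <;> simp [h]

lemma mul_nnProj_compl_negSemidef {X : Matrix ι ι ℂ} (hX : X.IsHermitian) :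
    (-(X * ((1 : Matrix ι ι ℂ) - nnProj X))).PosSemidef := by
  rw [nnProj_compl_eq hX]
  nth_rewrite 1 [← mfun_id hX]
  rw [mfun_mul]
  rw [← mfun_neg hX]
  refine mfun_posSemidef hX fun x => ?_
  by_cases h : 0 ≤ x <;> simp [h]
  · linarith

end PinchIneq

section MainEstimate

lemma nonempty_of_density {ρ : Matrix ι ι ℂ} (hρ : IsDensityOp ρ) : Nonempty ι := by
  by_contra h
  rw [not_nonempty_iff] at h
  have h0 : ρ.trace = 0 := by simp [Matrix.trace]
  rw [hρ.2] at h0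
  exact one_ne_zero h0

lemma one_le_distinctEigCount {σ : Matrix ι ι ℂ} (hσ : σ.IsHermitian) [Nonempty ι] :
    1 ≤ distinctEigCount σ := by
  rw [distinctEigCount_cast hσ]
  exact Finset.card_pos.mpr (Finset.univ_nonempty.image _)

set_option maxHeartbeats 2000000 in
/-- The key single-system estimate: the spectral error of the pinched pair at threshold `c`
is controlled by the spectral error of the original pair at threshold `ν`, up to
`2 √(d c / ν)`. -/
lemma main_estimate (ρ σ : Matrix ι ι ℂ) (hρ : IsDensityOp ρ) (hσ : IsDensityOp σ)
    (ν c : ℝ) (hν : 0 < ν) (hc : 0 < c) :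
    specErr (pinch σ ρ) σ c ≤ specErr ρ σ ν
      + 2 * Real.sqrt ((distinctEigCount σ : ℝ) * c / ν) := by
  classical
  obtain ⟨hρp, hρt⟩ := hρ
  obtain ⟨hσp, hσt⟩ := hσ
  have hρh : ρ.IsHermitian := hρp.1
  have hσh : σ.IsHermitian := hσp.1
  haveI hne : Nonempty ι := nonempty_of_density ⟨hρp, hρt⟩
  unfold specErr
  set d : ℕ := distinctEigCount σ with hd
  have hd1 : (1 : ℝ) ≤ (d : ℝ) := by exact_mod_cast one_le_distinctEigCount hσh
  set δ : ℝ := (d : ℝ) * c / ν with hδ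
  have hδpos : 0 < δ := by
    rw [hδ]; exact div_pos (mul_pos (by linarith) hc) hν
  set E := pinch σ ρ with hE
  have hEh : E.IsHermitian := pinch_isHermitian hσh hρh
  have hEσ : σ * E = E * σ := by rw [hE]; exact sigma_comm_pinch hσh ρ
  set X := ρ - (ν : ℂ) • σ with hX
  have hXh : X.IsHermitian := hρh.sub (ofReal_smul_herm ν hσh)
  set Y := E - (c : ℂ) • σ with hY
  have hYh : Y.IsHermitian := hEh.sub (ofReal_smul_herm c hσh)
  set Q := nnProj X with hQ
  set P := nnProj Y with hP
  set R := (1 : Matrix ι ι ℂ) - P with hR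
  -- commutations
  have hYσ : Y * σ = σ * Y := by
    rw [hY, Matrix.sub_mul, Matrix.mul_sub, Matrix.smul_mul, Matrix.mul_smul, hEσ]
  have hYE : Y * E = E * Y := by
    rw [hY, Matrix.sub_mul, Matrix.mul_sub, Matrix.smul_mul, Matrix.mul_smul, hEσ]
  have hPσ : P * σ = σ * P := by
    rw [hP, nnProj_eq hYh]
    exact mfun_comm hYh _ hYσ
  have hRE : R * E = E * R := by
    rw [hR, Matrix.sub_mul, Matrix.mul_sub, Matrix.one_mul, Matrix.mul_one, hP,
      nnProj_eq hYh, mfun_comm hYh _ hYE]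
  have hYPj : ∀ μ : ℝ, Y * eigProjAt σ μ = eigProjAt σ μ * Y := by
    intro μ
    have h1 : σ * eigProjAt σ μ = eigProjAt σ μ * σ := by
      rw [sigma_mul_eigProj hσh, eigProj_mul_sigma hσh]
    have h2 : E * eigProjAt σ μ = eigProjAt σ μ * E := by
      rw [hE]; exact eigProj_comm_pinch hσh ρ μ
    rw [hY, Matrix.sub_mul, Matrix.mul_sub, Matrix.smul_mul, Matrix.mul_smul, h1, h2]
  have hRPj : ∀ μ : ℝ, R * eigProjAt σ μ = eigProjAt σ μ * R := by
    intro μ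
    rw [hR, hP, nnProj_eq hYh, Matrix.sub_mul, Matrix.mul_sub, Matrix.one_mul, Matrix.mul_one,
      mfun_comm hYh _ (hYPj μ)]
  have hRR : R * R = R := by
    rw [hR, hP, nnProj_compl_eq hYh, mfun_mul]
    exact mfun_congr hYh fun i => by by_cases h : 0 ≤ hYh.eigenvalues i <;> simp [h]
  have hRherm : R.IsHermitian := by
    rw [hR, hP, nnProj_compl_eq hYh]; exact mfun_isHermitian hYh _
  have hQQ : Q * Q = Q := by
    rw [hQ, nnProj_eq hXh, mfun_mul]
    exact mfun_congr hXh fun i => by by_cases h : 0 ≤ hXh.eigenvalues i <;> simp [h]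
  have hQherm : Q.IsHermitian := by rw [hQ, nnProj_eq hXh]; exact mfun_isHermitian hXh _
  have hQp : Q.PosSemidef := nnProj_posSemidef hXh
  have h1Qp : ((1 : Matrix ι ι ℂ) - Q).PosSemidef := nnProj_compl_posSemidef hXh
  -- Step A : Tr[R E] = Tr[R ρ]
  have hA : (R * E).trace = (R * ρ).trace := by
    rw [hE, pinch_eq hσh, Finset.mul_sum, Matrix.trace_sum]
    have hterm : ∀ μ ∈ Finset.univ.image hσh.eigenvalues,
        (R * (eigProjAt σ μ * ρ * eigProjAt σ μ)).trace
          = ((R * eigProjAt σ μ) * ρ).trace := by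
      intro μ _
      have e1 : R * (eigProjAt σ μ * ρ * eigProjAt σ μ)
          = (R * eigProjAt σ μ * ρ) * eigProjAt σ μ := by
        simp only [Matrix.mul_assoc]
      rw [e1, Matrix.trace_mul_comm]
      have e2 : eigProjAt σ μ * (R * eigProjAt σ μ * ρ)
          = (R * (eigProjAt σ μ * eigProjAt σ μ)) * ρ := by
        rw [← Matrix.mul_assoc, ← Matrix.mul_assoc, ← hRPj μ]
        simp only [Matrix.mul_assoc]
      rw [e2, eigProj_mul hσh, if_pos rfl]
    rw [Finset.sum_congr rfl hterm]
    have e4 : ∑ μ ∈ Finset.univ.image hσh.eigenvalues, ((R * eigProjAt σ μ) * ρ).trace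
        = ((∑ μ ∈ Finset.univ.image hσh.eigenvalues, R * eigProjAt σ μ) * ρ).trace := by
      rw [Finset.sum_mul, Matrix.trace_sum]
    rw [e4, ← Finset.mul_sum, eigProj_sum hσh, Matrix.mul_one]
  -- square root of ρ
  set sq := mfun hρh Real.sqrt with hsq
  have hsqh : sq.IsHermitian := mfun_isHermitian hρh _
  have hsq2 : sq * sq = ρ := by
    rw [hsq, mfun_mul]
    have h5 := mfun_congr hρh (f := fun x => Real.sqrt x * Real.sqrt x) (g := fun x => x)
      (fun i => Real.mul_self_sqrt (hρp.eigenvalues_nonneg i))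
    rw [h5, mfun_id]
  have hB1 : (sq * R * sq).trace = (R * ρ).trace := by
    rw [Matrix.trace_mul_cycle, ← hsq2]
    exact Matrix.trace_mul_comm _ _
  have htR : ((R * ρ).trace).re = (((R * sq)ᴴ) * (R * sq)).trace.re := by
    have e1 : ((R * sq)ᴴ) * (R * sq) = sq * R * sq := by
      rw [Matrix.conjTranspose_mul, hsqh.eq, hRherm.eq]
      calc sq * R * (R * sq) = sq * (R * R) * sq := by simp only [Matrix.mul_assoc]
        _ = sq * R * sq := by rw [hRR]
    rw [e1, hB1]
  -- split
  have hsplit : ((R * ρ).trace).re = (((Q * R * sq)ᴴ * sq).trace).re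
      + (((R * sq)ᴴ * (((1 : Matrix ι ι ℂ) - Q) * sq)).trace).re := by
    have e1 : (Q * R * sq)ᴴ * sq = sq * R * (Q * sq) := by
      rw [Matrix.conjTranspose_mul, Matrix.conjTranspose_mul, hsqh.eq, hRherm.eq, hQherm.eq]
      simp only [Matrix.mul_assoc]
    have e2 : (R * sq)ᴴ * (((1 : Matrix ι ι ℂ) - Q) * sq)
        = sq * R * (((1 : Matrix ι ι ℂ) - Q) * sq) := by
      rw [Matrix.conjTranspose_mul, hsqh.eq, hRherm.eq]
    have e3 : sq * R * (Q * sq) + sq * R * (((1 : Matrix ι ι ℂ) - Q) * sq) = sq * R * sq := by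
      rw [← Matrix.mul_add, ← Matrix.add_mul,
        show Q + ((1 : Matrix ι ι ℂ) - Q) = 1 from by abel, Matrix.one_mul]
    rw [e1, e2, ← Complex.add_re, ← Matrix.trace_add, e3, hB1]
  -- Step C : ‖Q R sq‖² ≤ δ
  have hStepC : (((Q * R * sq)ᴴ * (Q * R * sq)).trace).re ≤ δ := by
    have eG : ((Q * R * sq)ᴴ * (Q * R * sq)).trace = ((R * Q * R) * ρ).trace := by
      have e5 : (Q * R * sq)ᴴ * (Q * R * sq) = sq * (R * Q * R) * sq := by
        rw [Matrix.conjTranspose_mul, Matrix.conjTranspose_mul, hsqh.eq, hRherm.eq, hQherm.eq]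
        calc sq * (R * Q) * (Q * R * sq) = sq * (R * (Q * Q) * R) * sq := by
              simp only [Matrix.mul_assoc]
          _ = sq * (R * Q * R) * sq := by rw [hQQ]
      rw [e5, Matrix.trace_mul_cycle, ← hsq2]
      exact Matrix.trace_mul_comm _ _
    have hGpsd : (R * Q * R).PosSemidef := by
      have h6 := Matrix.posSemidef_conjTranspose_mul_self (Q * R)
      have e5 : (Q * R)ᴴ * (Q * R) = R * Q * R := by
        rw [Matrix.conjTranspose_mul, hRherm.eq, hQherm.eq]
        calc R * Q * (Q * R) = R * (Q * Q) * R := by simp only [Matrix.mul_assoc]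
          _ = R * Q * R := by rw [hQQ]
      rwa [e5] at h6
    -- c1 : Tr[G ρ] ≤ d Tr[G E]
    have hc1 : (((R * Q * R) * ρ).trace).re ≤ (d : ℝ) * (((R * Q * R) * E).trace).re := by
      have h7 := trace_mul_re_nonneg hGpsd (pinch_psd_ineq hσh hρp)
      have e7 : (R * Q * R) * (((distinctEigCount σ : ℕ) : ℂ) • pinch σ ρ - ρ)
          = ((d : ℝ) : ℂ) • ((R * Q * R) * E) - (R * Q * R) * ρ := by
        rw [Matrix.mul_sub, Matrix.mul_smul, ← hE, ← hd]
        norm_cast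
      rw [e7, Matrix.trace_sub, Matrix.trace_smul, Complex.sub_re, smul_eq_mul,
        Complex.re_ofReal_mul] at h7
      linarith
    -- c2 : Tr[G E] ≤ c Tr[Q σ]
    have hc2 : (((R * Q * R) * E).trace).re ≤ c * ((Q * σ).trace).re := by
      have e8 : ((R * Q * R) * E).trace = (Q * (E * R)).trace := by
        have t1 : (R * Q * R) * E = R * (Q * (R * E)) := by simp only [Matrix.mul_assoc]
        rw [t1, Matrix.trace_mul_comm]
        congr 1
        calc Q * (R * E) * R = Q * (E * (R * R)) := by
              rw [hRE]; simp only [Matrix.mul_assoc]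
          _ = Q * (E * R) := by rw [hRR]
      have e10 : E * R = Y * R + (c : ℂ) • (σ * R) := by
        have e10' : Y + (c : ℂ) • σ = E := sub_add_cancel E ((c : ℂ) • σ)
        rw [← e10', Matrix.add_mul, Matrix.smul_mul]
      have e11 : (Q * (E * R)).trace.re
          = (Q * (Y * R)).trace.re + c * ((Q * (σ * R)).trace.re) := by
        rw [e10, Matrix.mul_add, Matrix.trace_add, Complex.add_re, Matrix.mul_smul,
          Matrix.trace_smul, smul_eq_mul, Complex.re_ofReal_mul]
      have e12 : (Q * (Y * R)).trace.re ≤ 0 := by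
        have h13 : (-(Y * R)).PosSemidef := by
          have h13' := mul_nnProj_compl_negSemidef hYh
          rwa [← hP, ← hR] at h13'
        have h14 := trace_mul_re_nonneg hQp h13
        rw [Matrix.mul_neg, Matrix.trace_neg, Complex.neg_re] at h14
        linarith
      have e13 : (Q * (σ * R)).trace.re ≤ (Q * σ).trace.re := by
        have hσPpsd : (σ * P).PosSemidef := by
          have hPp : P.PosSemidef := by rw [hP]; exact nnProj_posSemidef hYh
          set u := mfun hσh Real.sqrt with hu
          have huh : u.IsHermitian := mfun_isHermitian hσh _
          have hu2 : u * u = σ := by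
            rw [hu, mfun_mul]
            have h5 := mfun_congr hσh (f := fun x => Real.sqrt x * Real.sqrt x)
              (g := fun x => x) (fun i => Real.mul_self_sqrt (hσp.eigenvalues_nonneg i))
            rw [h5, mfun_id]
          have huP : u * P = P * u := by
            rw [hu]
            exact mfun_comm hσh Real.sqrt hPσ.symm
          have h16 := hPp.mul_mul_conjTranspose_same u
          have e17 : u * P * uᴴ = σ * P := by
            rw [huh.eq]
            calc u * P * u = u * (P * u) := by simp only [Matrix.mul_assoc]
              _ = u * (u * P) := by rw [huP]
              _ = (u * u) * P := by simp only [Matrix.mul_assoc]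
              _ = σ * P := by rw [hu2]
          rwa [e17] at h16
        have h18 := trace_mul_re_nonneg hQp hσPpsd
        have e19 : Q * (σ * R) = Q * σ - Q * (σ * P) := by
          rw [hR, Matrix.mul_sub, Matrix.mul_one, Matrix.mul_sub]
        rw [e19, Matrix.trace_sub, Complex.sub_re]
        linarith
      have h19 : 0 ≤ (Q * (σ * R)).trace.re := by
        have hσRpsd : (σ * R).PosSemidef := by
          have hRp : R.PosSemidef := by
            rw [hR, hP]; exact nnProj_compl_posSemidef hYh
          set u := mfun hσh Real.sqrt with hu
          have huh : u.IsHermitian := mfun_isHermitian hσh _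
          have hu2 : u * u = σ := by
            rw [hu, mfun_mul]
            have h5 := mfun_congr hσh (f := fun x => Real.sqrt x * Real.sqrt x)
              (g := fun x => x) (fun i => Real.mul_self_sqrt (hσp.eigenvalues_nonneg i))
            rw [h5, mfun_id]
          have hσR : R * σ = σ * R := by
            rw [hR, Matrix.sub_mul, Matrix.mul_sub, Matrix.one_mul, Matrix.mul_one, hPσ]
          have huR : u * R = R * u := by
            rw [hu]
            exact mfun_comm hσh Real.sqrt hσR.symm
          have h16 := hRp.mul_mul_conjTranspose_same u
          have e17 : u * R * uᴴ = σ * R := by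
            rw [huh.eq]
            calc u * R * u = u * (R * u) := by simp only [Matrix.mul_assoc]
              _ = u * (u * R) := by rw [← huR]
              _ = (u * u) * R := by simp only [Matrix.mul_assoc]
              _ = σ * R := by rw [hu2]
          rwa [e17] at h16
        exact trace_mul_re_nonneg hQp hσRpsd
      rw [e8, e11]
      have h20 : c * (Q * (σ * R)).trace.re ≤ c * (Q * σ).trace.re :=
        mul_le_mul_of_nonneg_left e13 hc.le
      linarith
    -- c3 : Tr[Q σ] ≤ 1/ν
    have hc3 : ((Q * σ).trace).re ≤ 1 / ν := by
      have h21 : 0 ≤ ((Q * X).trace).re := by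
        have h21' := mul_nnProj_posSemidef hXh
        rw [← hQ] at h21'
        exact trace_re_nonneg h21'
      have e21 : (Q * X).trace = (Q * ρ).trace - ((ν : ℝ) : ℂ) * (Q * σ).trace := by
        rw [hX, Matrix.mul_sub, Matrix.trace_sub, Matrix.mul_smul, Matrix.trace_smul,
          smul_eq_mul]
      have h22 : ((Q * ρ).trace).re ≤ 1 := by
        have h23 := trace_mul_re_nonneg h1Qp hρp
        have e24 : ((1 : Matrix ι ι ℂ) - Q) * ρ = ρ - Q * ρ := by
          rw [Matrix.sub_mul, Matrix.one_mul]
        rw [e24, Matrix.trace_sub, Complex.sub_re, hρt] at h23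
        simp only [Complex.one_re] at h23
        linarith
      rw [e21, Complex.sub_re, Complex.re_ofReal_mul] at h21
      rw [le_div_iff₀ hν]
      nlinarith
    -- combine
    have hd0 : (0 : ℝ) ≤ (d : ℝ) := by linarith
    have hfin : (((R * Q * R) * ρ).trace).re ≤ (d : ℝ) * (c * (1 / ν)) := by
      have s1 : (d : ℝ) * (((R * Q * R) * E).trace).re ≤ (d : ℝ) * (c * ((Q * σ).trace).re) :=
        mul_le_mul_of_nonneg_left hc2 hd0
      have s2 : (d : ℝ) * (c * ((Q * σ).trace).re) ≤ (d : ℝ) * (c * (1 / ν)) := by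
        apply mul_le_mul_of_nonneg_left _ hd0
        exact mul_le_mul_of_nonneg_left hc3 hc.le
      linarith
    have : (d : ℝ) * (c * (1 / ν)) = δ := by rw [hδ]; ring
    rw [eG]
    linarith
  -- bound 1
  have hbound1 : (((Q * R * sq)ᴴ * sq).trace).re ≤ Real.sqrt δ := by
    have hsp : 0 < Real.sqrt δ := Real.sqrt_pos.mpr hδpos
    have hθ : 0 < (Real.sqrt δ)⁻¹ := inv_pos.mpr hsp
    have h30 := re_trace_conjTranspose_mul_le (Q * R * sq) sq hθ
    have h32 : ((sqᴴ * sq).trace).re = 1 := by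
      rw [hsqh.eq, hsq2, hρt]
      simp
    rw [h32, inv_inv] at h30
    have h34 : (Real.sqrt δ)⁻¹ * (((Q * R * sq)ᴴ * (Q * R * sq)).trace).re
        ≤ (Real.sqrt δ)⁻¹ * δ := mul_le_mul_of_nonneg_left hStepC hθ.le
    have h35 : (Real.sqrt δ)⁻¹ * δ = Real.sqrt δ := by
      nth_rewrite 1 [← Real.mul_self_sqrt hδpos.le]
      rw [Real.sqrt_mul_self (Real.sqrt_nonneg _)]
      nth_rewrite 2 [← Real.mul_self_sqrt hδpos.le]
      rw [← mul_assoc, inv_mul_cancel₀ hsp.ne', one_mul]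
    linarith
  -- bound 2
  have hbound2 : (((R * sq)ᴴ * (((1 : Matrix ι ι ℂ) - Q) * sq)).trace).re
      ≤ (((R * ρ).trace).re + ((((1 : Matrix ι ι ℂ) - Q) * ρ).trace).re) / 2 := by
    have h40 := re_trace_conjTranspose_mul_le (R * sq) (((1 : Matrix ι ι ℂ) - Q) * sq) one_pos
    have e41 : (((R * sq)ᴴ) * (R * sq)).trace.re = ((R * ρ).trace).re := htR.symm
    have e42 : ((((1 : Matrix ι ι ℂ) - Q) * sq)ᴴ * (((1 : Matrix ι ι ℂ) - Q) * sq)).trace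
        = (((1 : Matrix ι ι ℂ) - Q) * ρ).trace := by
      have h1Qherm : ((1 : Matrix ι ι ℂ) - Q).IsHermitian := h1Qp.1
      have hQ1 : ((1 : Matrix ι ι ℂ) - Q) * ((1 : Matrix ι ι ℂ) - Q)
          = (1 : Matrix ι ι ℂ) - Q := by
        have hexp : ((1 : Matrix ι ι ℂ) - Q) * ((1 : Matrix ι ι ℂ) - Q)
            = (1 : Matrix ι ι ℂ) - Q - Q + Q * Q := by noncomm_ring
        rw [hexp, hQQ]
        abel
      rw [Matrix.conjTranspose_mul, hsqh.eq, h1Qherm.eq]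
      have e43 : sq * ((1 : Matrix ι ι ℂ) - Q) * (((1 : Matrix ι ι ℂ) - Q) * sq)
          = sq * ((1 : Matrix ι ι ℂ) - Q) * sq := by
        calc sq * ((1 : Matrix ι ι ℂ) - Q) * (((1 : Matrix ι ι ℂ) - Q) * sq)
            = sq * (((1 : Matrix ι ι ℂ) - Q) * ((1 : Matrix ι ι ℂ) - Q)) * sq := by
              simp only [Matrix.mul_assoc]
          _ = sq * ((1 : Matrix ι ι ℂ) - Q) * sq := by rw [hQ1]
      rw [e43, Matrix.trace_mul_cycle, ← hsq2]
      exact Matrix.trace_mul_comm _ _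
    rw [e41] at h40
    rw [congrArg Complex.re e42] at h40
    simpa using h40
  -- conclusion
  have hfin1 : ((R * E).trace).re = ((R * ρ).trace).re := congrArg Complex.re hA
  have hgoal : ((R * E).trace).re
      ≤ ((((1 : Matrix ι ι ℂ) - Q) * ρ).trace).re + 2 * Real.sqrt δ := by
    rw [hfin1]
    linarith [hsplit, hbound1, hbound2]
  exact hgoal

end MainEstimate


section SpecErrBounds

lemma specErr_nonneg {ρ σ : Matrix ι ι ℂ} (hρ : ρ.PosSemidef) (hσ : σ.IsHermitian) (μ : ℝ) :
    0 ≤ specErr ρ σ μ := by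
  unfold specErr
  have hXh : (ρ - (μ : ℂ) • σ).IsHermitian := hρ.1.sub (ofReal_smul_herm μ hσ)
  exact trace_mul_re_nonneg (nnProj_compl_posSemidef hXh) hρ

lemma specErr_le_one {ρ σ : Matrix ι ι ℂ} (hρ : IsDensityOp ρ) (hσ : σ.IsHermitian) (μ : ℝ) :
    specErr ρ σ μ ≤ 1 := by
  unfold specErr
  have hXh : (ρ - (μ : ℂ) • σ).IsHermitian := hρ.1.1.sub (ofReal_smul_herm μ hσ)
  have h1 : 0 ≤ ((nnProj (ρ - (μ : ℂ) • σ) * ρ).trace).re :=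
    trace_mul_re_nonneg (nnProj_posSemidef hXh) hρ.1
  have h2 : ((1 - nnProj (ρ - (μ : ℂ) • σ)) * ρ).trace
      = ρ.trace - (nnProj (ρ - (μ : ℂ) • σ) * ρ).trace := by
    rw [Matrix.sub_mul, Matrix.one_mul, Matrix.trace_sub]
  rw [h2, hρ.2, Complex.sub_re]
  simp only [Complex.one_re]
  linarith

end SpecErrBounds

end PinchAux

/-- **Pinching reduction (one direction).**
If the number of distinct eigenvalues of `σ_n` satisfies `(1/n) log d_n → 0`, then for
every `ε ∈ [0,1]`, `D̲(ε|ρ⃗‖σ⃗) ≤ D̲(ε|E(ρ⃗)‖σ⃗)` where `E_n` is the pinching map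
with respect to `σ_n`. -/
theorem stmt15 {Hn : ℕ → Type*} [∀ n, Fintype (Hn n)] [∀ n, DecidableEq (Hn n)]
    (ρ σ : (n : ℕ) → Matrix (Hn n) (Hn n) ℂ)
    (hρ : ∀ n, IsDensityOp (ρ n)) (hσ : ∀ n, IsDensityOp (σ n))
    (hd : Filter.Tendsto
      (fun n : ℕ => (1 / (n : ℝ)) * Real.log (distinctEigCount (σ n)))
      Filter.atTop (nhds 0))
    (ε : ℝ) (hε0 : 0 ≤ ε) (hε1 : ε ≤ 1) :
    Dlow ε ρ σ ≤ Dlow ε (fun n => pinch (σ n) (ρ n)) σ := by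
  classical
  unfold Dlow
  refine sSup_le ?_
  rintro x ⟨a, ha, rfl⟩
  simp only [Set.mem_setOf_eq] at ha
  -- `ha : limsup (fun n => specErr (ρ n) (σ n) (exp (n a))) atTop ≤ ε`
  by_contra hlt
  push_neg at hlt
  obtain ⟨b, hb1, hb2⟩ := EReal.exists_between_coe_real hlt
  have hba : b < a := by exact_mod_cast hb2
  -- notation
  set f : ℕ → ℝ := fun n => specErr (ρ n) (σ n) (Real.exp (n * a)) with hf
  set g : ℕ → ℝ := fun n => specErr (pinch (σ n) (ρ n)) (σ n) (Real.exp (n * b)) with hg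
  set η : ℕ → ℝ := fun n =>
    2 * Real.sqrt ((distinctEigCount (σ n) : ℝ) * Real.exp (n * b) / Real.exp (n * a)) with hη
  have hd1 : ∀ n, (1 : ℝ) ≤ (distinctEigCount (σ n) : ℝ) := by
    intro n
    haveI : Nonempty (Hn n) := PinchAux.nonempty_of_density (hσ n)
    exact_mod_cast PinchAux.one_le_distinctEigCount (hσ n).1.1
  -- per-n estimate
  have hmain : ∀ n, g n ≤ f n + η n := fun n =>
    PinchAux.main_estimate (ρ n) (σ n) (hρ n) (hσ n) _ _ (Real.exp_pos _) (Real.exp_pos _)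
  -- η → 0
  have hηlim : Filter.Tendsto η Filter.atTop (nhds 0) := by
    have hu : Filter.Tendsto
        (fun n : ℕ => (distinctEigCount (σ n) : ℝ) * Real.exp (n * b) / Real.exp (n * a))
        Filter.atTop (nhds 0) := by
      have hL : Filter.Tendsto
          (fun n : ℕ => Real.log (distinctEigCount (σ n)) + ((n : ℝ) * b - (n : ℝ) * a))
          Filter.atTop Filter.atBot := by
        have hM : Filter.Tendsto
            (fun n : ℕ => (1 / (n : ℝ)) * Real.log (distinctEigCount (σ n)) + (b - a))
            Filter.atTop (nhds (b - a)) := by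
          have := hd.add_const (b - a)
          simpa using this
        have hN : Filter.Tendsto (fun n : ℕ => (n : ℝ)) Filter.atTop Filter.atTop :=
          tendsto_natCast_atTop_atTop
        have hprod := Filter.Tendsto.atTop_mul_neg (by linarith : b - a < 0) hN hM
        apply hprod.congr'
        filter_upwards [Filter.eventually_ge_atTop 1] with n hn
        have hn0 : (n : ℝ) ≠ 0 := by
          have : (1 : ℝ) ≤ (n : ℝ) := by exact_mod_cast hn
          linarith
        field_simp
      have hcomp := Real.tendsto_exp_atBot.comp hL
      apply hcomp.congr
      intro n
      have hdpos : (0 : ℝ) < (distinctEigCount (σ n) : ℝ) := lt_of_lt_of_le one_pos (hd1 n)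
      simp only [Function.comp_apply]
      rw [Real.exp_add, Real.exp_log hdpos, Real.exp_sub]
      ring
    have hsq : Filter.Tendsto
        (fun n : ℕ => Real.sqrt ((distinctEigCount (σ n) : ℝ) * Real.exp (n * b)
          / Real.exp (n * a))) Filter.atTop (nhds 0) := by
      have := (Real.continuous_sqrt.tendsto 0).comp hu
      simpa [Function.comp_def] using this
    have := hsq.const_mul 2
    rw [hη]
    simpa using this
  -- bounds for limsup manipulation
  have hg0 : ∀ n, 0 ≤ g n := fun n =>
    PinchAux.specErr_nonneg
      (PinchAux.pinch_posSemidef (hσ n).1.1 (hρ n).1) (hσ n).1.1 _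
  have hf1 : ∀ n, f n ≤ 1 := fun n => PinchAux.specErr_le_one (hρ n) (hσ n).1.1 _
  have hfbd : Filter.IsBoundedUnder (· ≤ ·) Filter.atTop f :=
    Filter.isBoundedUnder_of ⟨1, hf1⟩
  have hgcob : Filter.IsCoboundedUnder (· ≤ ·) Filter.atTop g :=
    Filter.isCoboundedUnder_le_of_le Filter.atTop hg0
  -- limsup g ≤ ε
  have hmem : Filter.limsup g Filter.atTop ≤ ε := by
    have key : ∀ w, ε < w → Filter.limsup g Filter.atTop ≤ w := by
      intro w hw
      apply Filter.limsup_le_of_le hgcob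
      have hfev : ∀ᶠ n in Filter.atTop, f n < (ε + w) / 2 :=
        Filter.eventually_lt_of_limsup_lt (lt_of_le_of_lt ha (by linarith)) hfbd
      have hηev : ∀ᶠ n in Filter.atTop, η n < (w - ε) / 2 := by
        have : (0 : ℝ) < (w - ε) / 2 := by linarith
        exact hηlim.eventually_lt_const this
      filter_upwards [hfev, hηev] with n h1 h2
      have := hmain n
      linarith
    by_contra hcon
    push_neg at hcon
    have := key ((ε + Filter.limsup g Filter.atTop) / 2) (by linarith)
    linarith
  have hble : (b : EReal) ≤ sSup ((fun a : ℝ => (a : EReal)) ''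
      {a : ℝ | Filter.limsup
        (fun n : ℕ => specErr (pinch (σ n) (ρ n)) (σ n) (Real.exp (n * a)))
        Filter.atTop ≤ ε}) := by
    apply le_sSup
    exact ⟨b, hmem, rfl⟩
  exact lt_irrefl _ (lt_of_le_of_lt hble hb1)
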